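/- arXiv:2208.11976 — 4 statements merged into one kernel-verified Lean document; each statement's English description precedes it below -/
import Mathlib

section
/- For all k ≥ 2 and x ∈ [1/2, 1), u_{k+2}(x) ≥ u_k(x), where u_k(x) = λ^(k)(x)/(k+1)! and λ(x) = ln x − ln(1−x). -/
open Real

/-- λ(x) = ln x − ln(1−x). -/
noncomputable def lam (x : ℝ) : ℝ := Real.log x - Real.log (1 - x)

/-- u_k(x) = λ⁽ᵏ⁾(x)/(k+1)!, with u_0 = λ. -/
noncomputable def u (k : ℕ) (x : ℝ) : ℝ := iteratedDeriv k lam x / (Nat.factorial (k + 1) : ℝ)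

lemma lam_hasDerivAt (x : ℝ) (hx : x ∈ Set.Ioo (0:ℝ) 1) :
    HasDerivAt lam (x⁻¹ + (1-x)⁻¹) x := by
  have hx0 : (0:ℝ) < x := hx.1
  have hx1 : (0:ℝ) < 1 - x := by linarith [hx.2]
  have h1 : HasDerivAt Real.log x⁻¹ x := Real.hasDerivAt_log hx0.ne'
  have hlin : HasDerivAt (fun y : ℝ => 1 - y) (-1) x := by
    simpa using (hasDerivAt_id x).const_sub 1
  have h2 : HasDerivAt (fun y : ℝ => Real.log (1 - y)) ((1-x)⁻¹ * (-1)) x :=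
    (Real.hasDerivAt_log hx1.ne').comp x hlin
  have := h1.sub h2
  refine this.congr_deriv ?_
  ring

lemma hasDerivAt_g (n : ℕ) (x : ℝ) (hx : x ∈ Set.Ioo (0:ℝ) 1) :
    HasDerivAt (fun y : ℝ => (Nat.factorial n : ℝ) * ((-1)^n * (y^(n+1))⁻¹ + ((1-y)^(n+1))⁻¹))
      ((Nat.factorial (n+1) : ℝ) * ((-1)^(n+1) * (x^(n+2))⁻¹ + ((1-x)^(n+2))⁻¹)) x := by
  have hx0 : x ≠ 0 := ne_of_gt hx.1
  have hx1 : (0:ℝ) < 1 - x := by linarith [hx.2]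
  have h1 : HasDerivAt (fun y : ℝ => (y^(n+1))⁻¹) (-((n+1:ℝ)) * (x^(n+2))⁻¹) x := by
    have h := (hasDerivAt_pow (n+1) x).inv (pow_ne_zero _ hx0)
    refine h.congr_deriv ?_
    rw [Nat.add_sub_cancel]
    push_cast
    field_simp
    ring
  have h2 : HasDerivAt (fun y : ℝ => ((1-y)^(n+1))⁻¹) (((n+1:ℝ)) * ((1-x)^(n+2))⁻¹) x := by
    have hlin : HasDerivAt (fun y : ℝ => 1 - y) (-1) x := by
      simpa using (hasDerivAt_id x).const_sub 1
    have hpow : HasDerivAt (fun y : ℝ => (1-y)^(n+1)) (((n+1:ℝ)) * (1-x)^n * (-1)) x := by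
      simpa using hlin.fun_pow (n+1)
    have h := hpow.inv (pow_ne_zero _ hx1.ne')
    refine h.congr_deriv ?_
    field_simp
    ring
  have H := (h1.const_mul ((Nat.factorial n : ℝ) * (-1)^n)).add
    (h2.const_mul (Nat.factorial n : ℝ))
  have Hfun : (fun y : ℝ => (Nat.factorial n : ℝ) * ((-1)^n * (y^(n+1))⁻¹ + ((1-y)^(n+1))⁻¹))
      = (fun y : ℝ => (Nat.factorial n : ℝ) * (-1)^n * (y^(n+1))⁻¹
          + (Nat.factorial n : ℝ) * ((1-y)^(n+1))⁻¹) := by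
    funext y; ring
  rw [Hfun]
  refine H.congr_deriv ?_
  rw [Nat.factorial_succ]
  push_cast
  ring

lemma iter_formula (k : ℕ) : ∀ x ∈ Set.Ioo (0:ℝ) 1,
    iteratedDeriv (k+1) lam x
      = (Nat.factorial k : ℝ) * ((-1)^k * (x^(k+1))⁻¹ + ((1-x)^(k+1))⁻¹) := by
  induction k with
  | zero =>
    intro x hx
    rw [iteratedDeriv_one, (lam_hasDerivAt x hx).deriv]
    simp
  | succ n ih =>
    intro x hx
    have heq : iteratedDeriv (n+1) lam
        =ᶠ[nhds x] fun y => (Nat.factorial n : ℝ) * ((-1)^n * (y^(n+1))⁻¹ + ((1-y)^(n+1))⁻¹) := by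
      filter_upwards [isOpen_Ioo.mem_nhds hx] with y hy using ih y hy
    rw [iteratedDeriv_succ, heq.deriv_eq, (hasDerivAt_g n x hx).deriv]

lemma keyNeg (K p q A2 B2 : ℝ) (hK : 2 ≤ K) (hp : 1 ≤ p) (hpq : p ≤ q)
    (hAB : A2 ≤ B2) (hA1 : 1 ≤ A2) (hB : 4 ≤ B2) :
    (K+2)*(K+3)*(-p + q) ≤ K*(K+1)*(-(A2*p) + B2*q) := by
  nlinarith [mul_nonneg (mul_nonneg (by linarith : (0:ℝ) ≤ K) (by linarith : (0:ℝ) ≤ K+1))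
      (mul_nonneg (by linarith : (0:ℝ) ≤ B2 - 4) (by linarith : (0:ℝ) ≤ q - p)),
    mul_nonneg (mul_nonneg (by linarith : (0:ℝ) ≤ K) (by linarith : (0:ℝ) ≤ K+1))
      (mul_nonneg (by linarith : (0:ℝ) ≤ B2 - A2) (by linarith : (0:ℝ) ≤ p)),
    mul_nonneg (by nlinarith : (0:ℝ) ≤ 3*K^2 - K - 6) (by linarith : (0:ℝ) ≤ q - p)]

lemma keyPos (K p q A2 B2 : ℝ) (hK : 3 ≤ K) (hp : 1 ≤ p) (hpq : p ≤ q)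
    (hA1 : 1 ≤ A2) (hB : 4 ≤ B2) :
    (K+2)*(K+3)*(p + q) ≤ K*(K+1)*(A2*p + B2*q) := by
  nlinarith [mul_nonneg (mul_nonneg (by linarith : (0:ℝ) ≤ K) (by linarith : (0:ℝ) ≤ K+1))
      (mul_nonneg (by linarith : (0:ℝ) ≤ B2 - 4) (by linarith : (0:ℝ) ≤ q)),
    mul_nonneg (mul_nonneg (by linarith : (0:ℝ) ≤ K) (by linarith : (0:ℝ) ≤ K+1))
      (mul_nonneg (by linarith : (0:ℝ) ≤ A2 - 1) (by linarith : (0:ℝ) ≤ p)),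
    mul_nonneg (by nlinarith : (0:ℝ) ≤ 3*K^2 - K - 6) (by linarith : (0:ℝ) ≤ q - p),
    mul_nonneg (by nlinarith : (0:ℝ) ≤ 3*K^2 - 5*K - 12) (by linarith : (0:ℝ) ≤ p)]

theorem stmt8 (k : ℕ) (hk : 2 ≤ k) (x : ℝ) (hx : x ∈ Set.Ico (1 / 2 : ℝ) 1) :
    u k x ≤ u (k + 2) x := by
  obtain ⟨m, rfl⟩ : ∃ m, k = m + 2 := ⟨k - 2, by omega⟩
  obtain ⟨hxl, hxr⟩ := hx
  have hx0 : (0:ℝ) < x := by linarith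
  have hx1 : (0:ℝ) < 1 - x := by linarith
  have hmem : x ∈ Set.Ioo (0:ℝ) 1 := ⟨hx0, hxr⟩
  have e1 := iter_formula (m+1) x hmem
  have e2 := iter_formula (m+3) x hmem
  set p : ℝ := (x^(m+2))⁻¹ with hp_def
  set q : ℝ := ((1-x)^(m+2))⁻¹ with hq_def
  have hp4 : (x^(m+4))⁻¹ = (x^2)⁻¹ * p := by
    rw [hp_def, show m+4 = m+2+2 from rfl, pow_add, mul_inv]; ring
  have hq4 : ((1-x)^(m+4))⁻¹ = ((1-x)^2)⁻¹ * q := by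
    rw [hq_def, show m+4 = m+2+2 from rfl, pow_add, mul_inv]; ring
  have hxpow_pos : (0:ℝ) < x^(m+2) := by positivity
  have hypow_pos : (0:ℝ) < (1-x)^(m+2) := by positivity
  have hp1 : 1 ≤ p := by
    rw [hp_def, one_le_inv_iff₀]
    exact ⟨hxpow_pos, pow_le_one₀ hx0.le hxr.le⟩
  have hpq : p ≤ q := by
    rw [hp_def, hq_def]
    exact inv_anti₀ hypow_pos (pow_le_pow_left₀ hx1.le (by linarith) _)
  have hA1 : 1 ≤ (x^2)⁻¹ := by
    rw [one_le_inv_iff₀]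
    constructor
    · positivity
    · nlinarith
  have hB4 : 4 ≤ ((1-x)^2)⁻¹ := by
    have h1 : (1-x)^2 ≤ 4⁻¹ := by nlinarith
    calc (4:ℝ) = (4⁻¹)⁻¹ := by norm_num
      _ ≤ ((1-x)^2)⁻¹ := inv_anti₀ (by positivity) h1
  have hAB : (x^2)⁻¹ ≤ ((1-x)^2)⁻¹ :=
    inv_anti₀ (by positivity) (by nlinarith)
  have hf3 : (Nat.factorial (m+3) : ℝ) = ((m:ℝ)+3)*((m:ℝ)+2) * (Nat.factorial (m+1) : ℝ) := by
    rw [show m+3 = (m+2)+1 from rfl, Nat.factorial_succ, Nat.factorial_succ]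
    push_cast; ring
  have hf5 : (Nat.factorial (m+5) : ℝ)
      = ((m:ℝ)+5)*((m:ℝ)+4)*((m:ℝ)+3)*((m:ℝ)+2) * (Nat.factorial (m+1) : ℝ) := by
    rw [show m+5 = (m+4)+1 from rfl, show m+4 = (m+3)+1 from rfl,
      show m+3 = (m+2)+1 from rfl, Nat.factorial_succ, Nat.factorial_succ,
      Nat.factorial_succ, Nat.factorial_succ]
    push_cast; ring
  rw [u, u]
  simp only [show m+2+1 = m+3 from rfl, show m+2+2 = m+4 from rfl, show m+4+1 = m+5 from rfl]
  rw [e1, e2, hf3, hf5, hp4, hq4]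
  rw [div_le_div_iff₀ (by positivity) (by positivity)]
  have hs : ((-1:ℝ))^(m+3) = (-1)^(m+1) := by
    rw [pow_succ, pow_succ]; ring
  rw [hs]
  set F : ℝ := (Nat.factorial (m+1) : ℝ)
  have hcpos : (0:ℝ) ≤ ((m:ℝ)+2)*(((m:ℝ)+2)+1)*F^2 := by positivity
  rcases Nat.even_or_odd m with hm | hm
  · have hsgn : ((-1:ℝ))^(m+1) = -1 := Odd.neg_one_pow hm.add_one
    rw [hsgn]
    have hkey := keyNeg ((m:ℝ)+2) p q ((x^2)⁻¹) (((1-x)^2)⁻¹)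
      (by have : (0:ℝ) ≤ (m:ℝ) := Nat.cast_nonneg m; linarith) hp1 hpq hAB hA1 hB4
    have h := mul_le_mul_of_nonneg_left hkey hcpos
    refine le_trans (le_of_eq ?_) (le_trans h (le_of_eq ?_)) <;> ring
  · have hsgn : ((-1:ℝ))^(m+1) = 1 := Even.neg_one_pow hm.add_one
    rw [hsgn]
    have hm1 : 1 ≤ m := hm.pos
    have hK3 : (3:ℝ) ≤ (m:ℝ)+2 := by
      have : (1:ℝ) ≤ (m:ℝ) := by exact_mod_cast hm1
      linarith
    have hkey := keyPos ((m:ℝ)+2) p q ((x^2)⁻¹) (((1-x)^2)⁻¹) hK3 hp1 hpq hA1 hB4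
    have h := mul_le_mul_of_nonneg_left hkey hcpos
    refine le_trans (le_of_eq ?_) (le_trans h (le_of_eq ?_)) <;> ring
end

section
/- Let r(k) = max(5, 2·⌈(k−1)/2⌉ + 1), u_k(x) = λ^(k)(x)/(k+1)! with λ(x) = ln x − ln(1−x). Then for all x ∈ [1/2, 1), k ∈ ℕ, and k' ∈ {0, 1, ..., k}: 0 ≤ min(u_0(x), u_1(x)) ≤ u_{k'}(x) ≤ u_{r(k)}(x). -/
set_option linter.unusedSectionVars false
set_option maxHeartbeats 1000000

open Real

/-- r(k) = max(5, 2⌈(k−1)/2⌉ + 1); for natural k, ⌈(k−1)/2⌉ = ⌊k/2⌋. -/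
def r (k : ℕ) : ℕ := max 5 (2 * (k / 2) + 1)

lemma iter_lam (k : ℕ) : ∀ x ∈ Set.Ioo (0:ℝ) 1,
    iteratedDeriv (k+1) lam x
      = (k.factorial : ℝ) * ((-1:ℝ)^k * x ^ (-(k+1:ℕ) : ℤ) + (1-x) ^ (-(k+1:ℕ) : ℤ)) := by
  induction k with
  | zero =>
    intro x hx
    have hx0 : x ≠ 0 := ne_of_gt hx.1
    have hx1 : (1 - x) ≠ 0 := by have := hx.2; intro h; linarith [sub_eq_zero.mp h]
    have h2 : HasDerivAt (fun y : ℝ => Real.log (1 - y)) ((1-x)⁻¹ * (-1)) x :=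
      (Real.hasDerivAt_log hx1).comp x ((hasDerivAt_id x).const_sub 1)
    have h : HasDerivAt lam (x⁻¹ - (1-x)⁻¹ * (-1)) x :=
      (Real.hasDerivAt_log hx0).sub h2
    rw [iteratedDeriv_one, h.deriv]
    simp [zpow_neg]
  | succ k ih =>
    intro x hx
    have hx0 : x ≠ 0 := ne_of_gt hx.1
    have hx1 : (1 - x) ≠ 0 := by have := hx.2; intro h; linarith [sub_eq_zero.mp h]
    rw [iteratedDeriv_succ]
    have hmem : Set.Ioo (0:ℝ) 1 ∈ nhds x := isOpen_Ioo.mem_nhds hx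
    have heq : iteratedDeriv (k+1) lam =ᶠ[nhds x]
        (fun y : ℝ => (k.factorial : ℝ) * ((-1:ℝ)^k * y ^ (-(k+1:ℕ) : ℤ) + (1-y) ^ (-(k+1:ℕ) : ℤ))) :=
      Filter.eventuallyEq_of_mem hmem (fun y hy => ih y hy)
    rw [heq.deriv_eq]
    have h1 : HasDerivAt (fun y : ℝ => y ^ (-(k+1:ℕ) : ℤ))
        (((-(k+1:ℕ) : ℤ) : ℝ) * x ^ ((-(k+1:ℕ) : ℤ) - 1)) x :=
      hasDerivAt_zpow _ _ (Or.inl hx0)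
    have h2 : HasDerivAt (fun y : ℝ => (1-y) ^ (-(k+1:ℕ) : ℤ))
        ((((-(k+1:ℕ) : ℤ) : ℝ) * (1-x) ^ ((-(k+1:ℕ) : ℤ) - 1)) * (-1)) x :=
      (hasDerivAt_zpow _ _ (Or.inl hx1)).comp x ((hasDerivAt_id x).const_sub 1)
    have h : HasDerivAt (fun y : ℝ => (k.factorial : ℝ) * ((-1:ℝ)^k * y ^ (-(k+1:ℕ) : ℤ) + (1-y) ^ (-(k+1:ℕ) : ℤ)))
        ((k.factorial : ℝ) * ((-1:ℝ)^k * (((-(k+1:ℕ) : ℤ) : ℝ) * x ^ ((-(k+1:ℕ) : ℤ) - 1)) +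
          (((-(k+1:ℕ) : ℤ) : ℝ) * (1-x) ^ ((-(k+1:ℕ) : ℤ) - 1)) * (-1))) x :=
      ((h1.const_mul ((-1:ℝ)^k)).add h2).const_mul _
    rw [h.deriv]
    have he : ((-(k+1:ℕ) : ℤ) - 1) = (-(k+2:ℕ) : ℤ) := by push_cast; ring
    rw [he]
    rw [Nat.factorial_succ]
    push_cast
    ring

lemma u_succ (k : ℕ) (x : ℝ) (hx : x ∈ Set.Ioo (0:ℝ) 1) :
    u (k+1) x = ((-1:ℝ)^k * (x⁻¹)^(k+1) + ((1-x)⁻¹)^(k+1)) / ((k+1) * (k+2)) := by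
  have h := iter_lam k x hx
  have hz : ∀ y : ℝ, y ^ (-(k+1:ℕ) : ℤ) = (y⁻¹)^(k+1) := by
    intro y
    rw [zpow_neg, zpow_natCast, inv_pow]
  rw [u, h, hz, hz]
  rw [show k+1+1 = k+2 from rfl, Nat.factorial_succ, Nat.factorial_succ]
  have : (k.factorial : ℝ) ≠ 0 := Nat.cast_ne_zero.mpr k.factorial_ne_zero
  field_simp
  push_cast
  ring

noncomputable def SS (A B : ℝ) (j : ℕ) : ℝ := (A^j + B^j) / ((j:ℝ) * (j+1))

section ineq
variable {A B : ℝ} (hA1 : 1 ≤ A) (hA2 : A ≤ 2) (hB2 : 2 ≤ B) (hAB : A ≤ B) (hprod : A*B = A+B)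

include hA1 hA2 hB2 hAB in
lemma SS_step : ∀ j : ℕ, 4 ≤ j → SS A B j ≤ SS A B (j+1) := by
  intro j hj
  have hA0 : (0:ℝ) ≤ A := by linarith
  have hjr : (4:ℝ) ≤ (j:ℝ) := by exact_mod_cast hj
  have t1 : A^j ≤ A^(j+1) := by
    calc A^j = A^j * 1 := by ring
    _ ≤ A^j * A := by nlinarith [pow_nonneg hA0 j]
    _ = A^(j+1) := by ring
  have t2 : 2 * B^j ≤ B^(j+1) := by
    have hB0 : (0:ℝ) ≤ B^j := pow_nonneg (by linarith) j
    calc 2 * B^j = B^j * 2 := by ring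
    _ ≤ B^j * B := by nlinarith
    _ = B^(j+1) := by ring
  have t3 : A^j ≤ B^j := pow_le_pow_left₀ hA0 hAB j
  have hAj : (0:ℝ) ≤ A^j := pow_nonneg hA0 j
  have t1' : (j:ℝ) * A^j ≤ (j:ℝ) * A^(j+1) := by nlinarith
  have t2' : (j:ℝ) * (2*B^j) ≤ (j:ℝ) * B^(j+1) := by nlinarith
  have t3' : ((j:ℝ)-4) * A^j ≤ ((j:ℝ)-4) * B^j := by nlinarith
  have key : ((j:ℝ)+2) * (A^j + B^j) ≤ (j:ℝ) * (A^(j+1) + B^(j+1)) := by nlinarith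
  have hd1 : (0:ℝ) < (j:ℝ) * ((j:ℝ)+1) := by nlinarith
  have hd2 : (0:ℝ) < ((j:ℝ)+1) * ((j:ℝ)+2) := by nlinarith
  rw [SS, SS, div_le_div_iff₀ hd1 (by push_cast; nlinarith)]
  push_cast
  nlinarith [mul_le_mul_of_nonneg_left key (by linarith : (0:ℝ) ≤ (j:ℝ)+1)]

include hA1 hA2 hB2 hAB in
lemma SS_chain : ∀ j m : ℕ, 4 ≤ j → j ≤ m → SS A B j ≤ SS A B m := by
  intro j m hj hjm
  induction m, hjm using Nat.le_induction with
  | base => exact le_refl _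
  | succ m hm ih => exact le_trans ih (SS_step hA1 hA2 hB2 hAB m (le_trans hj hm))

include hA1 hA2 hB2 hAB hprod in
lemma SS_1_5 : SS A B 1 ≤ SS A B 5 := by
  have hS4 : 4 ≤ A + B := by nlinarith
  have hid : A^5 + B^5 = (A+B)^5 - 5*(A*B)*(A+B)^3 + 5*(A*B)^2*(A+B) := by ring
  rw [hprod] at hid
  have ht : (0:ℝ) ≤ A + B - 4 := by linarith
  have key : 15*(A+B) ≤ A^5+B^5 := by
    rw [hid]
    nlinarith [mul_nonneg ht ht, mul_nonneg (mul_nonneg ht ht) ht, mul_nonneg (mul_nonneg (mul_nonneg ht ht) ht) ht, mul_nonneg (mul_nonneg (mul_nonneg (mul_nonneg ht ht) ht) ht) ht]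
  rw [SS, SS]
  push_cast
  rw [div_le_div_iff₀ (by norm_num) (by norm_num)]
  nlinarith [key]

include hA1 hA2 hB2 hAB in
lemma SS_2_5 : SS A B 2 ≤ SS A B 5 := by
  have ha : (0:ℝ) ≤ A - 1 := by linarith
  have hb : (0:ℝ) ≤ B - 2 := by linarith
  have ha2 := mul_nonneg ha ha
  have ha3 := mul_nonneg ha2 ha
  have ha4 := mul_nonneg ha3 ha
  have ha5 := mul_nonneg ha4 ha
  have hb2 := mul_nonneg hb hb
  have hb3 := mul_nonneg hb2 hb
  have hb4 := mul_nonneg hb3 hb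
  have hb5 := mul_nonneg hb4 hb
  have hsq := sq_nonneg (A - 3/2)
  have key : 5*(A^2+B^2) ≤ A^5+B^5 := by nlinarith [ha3, ha4, ha5, hb, hb2, hb3, hb4, hb5, hsq]
  rw [SS, SS]
  push_cast
  rw [div_le_div_iff₀ (by norm_num) (by norm_num)]
  nlinarith [key]

include hA1 hA2 hB2 hAB in
lemma SS_3_5 : SS A B 3 ≤ SS A B 5 := by
  have ha : (0:ℝ) ≤ A - 1 := by linarith
  have hb : (0:ℝ) ≤ B - 2 := by linarith
  have ha2 := mul_nonneg ha ha
  have ha3 := mul_nonneg ha2 ha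
  have ha4 := mul_nonneg ha3 ha
  have ha5 := mul_nonneg ha4 ha
  have hb2 := mul_nonneg hb hb
  have hb3 := mul_nonneg hb2 hb
  have hb4 := mul_nonneg hb3 hb
  have hb5 := mul_nonneg hb4 hb
  have hsq := sq_nonneg (A - 3/2)
  have key : 5*(A^3+B^3) ≤ 2*(A^5+B^5) := by nlinarith [ha3, ha4, ha5, hb, hb2, hb3, hb4, hb5, hsq]
  rw [SS, SS]
  push_cast
  rw [div_le_div_iff₀ (by norm_num) (by norm_num)]
  nlinarith [key]

include hA1 hA2 hB2 hAB hprod in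
lemma base_sub (j : ℕ) (hj : 2 ≤ j) : ((j:ℝ) * ((j:ℝ)+1)) * (B-2) ≤ B^j - A^j := by
  induction j, hj using Nat.le_induction with
  | base =>
    have h1 : A*(B-1) = B := by linear_combination hprod
    have hb : (0:ℝ) ≤ B - 2 := by linarith
    have key : (0:ℝ) ≤ (B-2)*((B-2)^3+2) := by
      nlinarith [mul_nonneg (mul_nonneg (mul_nonneg hb hb) hb) hb, hb]
    have expand : (B^2 - A^2 - 6*(B-2))*(B-1)^2 = (B-2)*((B-2)^3+2) := by
      linear_combination (-(A*(B-1)+B)) * h1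
    have hc : (0:ℝ) < (B-1)^2 := by nlinarith
    push_cast
    nlinarith [key, expand, hc]
  | succ j hj ih =>
    have hjr : (2:ℝ) ≤ (j:ℝ) := by exact_mod_cast hj
    have hA0 : (0:ℝ) ≤ A := by linarith
    have hAj : (1:ℝ) ≤ A^j := one_le_pow₀ hA1
    have hBj : A^j ≤ B^j := pow_le_pow_left₀ hA0 hAB j
    have hB2' : (0:ℝ) ≤ B - 2 := by linarith
    have hjj : (0:ℝ) ≤ (j:ℝ)*((j:ℝ)+1)*(B-2) := by positivity
    have f1 : B^(j+1) - A^(j+1) = (B*B^j - B*A^j) + (B - A)*A^j := by ring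
    have t1 : B * ((j:ℝ)*((j:ℝ)+1)*(B-2)) ≤ B * (B^j - A^j) :=
      mul_le_mul_of_nonneg_left ih (by linarith)
    have g1 : 2 * ((j:ℝ)*((j:ℝ)+1)*(B-2)) ≤ B * ((j:ℝ)*((j:ℝ)+1)*(B-2)) :=
      mul_le_mul_of_nonneg_right hB2 hjj
    have g2 : (B-2)*1 ≤ (B-2)*A^j := mul_le_mul_of_nonneg_left hAj hB2'
    have g3 : (0:ℝ) ≤ (2-A)*A^j := mul_nonneg (by linarith) (by positivity)
    have g4 : (0:ℝ) ≤ ((j:ℝ)^2-(j:ℝ)-1)*(B-2) := mul_nonneg (by nlinarith) hB2'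
    push_cast
    nlinarith [t1, g1, g2, g3, g4, f1]
end ineq

theorem stmt10 (k k' : ℕ) (hk' : k' ≤ k) (x : ℝ) (hx : x ∈ Set.Ico (1 / 2 : ℝ) 1) :
    0 ≤ min (u 0 x) (u 1 x) ∧ min (u 0 x) (u 1 x) ≤ u k' x ∧ u k' x ≤ u (r k) x := by
  obtain ⟨hxh, hx1⟩ := hx
  have hx0 : (0:ℝ) < x := by linarith
  have h1x : (0:ℝ) < 1 - x := by linarith
  have hx01 : x ∈ Set.Ioo (0:ℝ) 1 := ⟨hx0, hx1⟩
  set A : ℝ := x⁻¹ with hAdef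
  set B : ℝ := (1-x)⁻¹ with hBdef
  have hI : (0:ℝ) < A := inv_pos.2 hx0
  have hJ : (0:ℝ) < B := inv_pos.2 h1x
  have hxI : x * A = 1 := mul_inv_cancel₀ (ne_of_gt hx0)
  have hxJ : (1-x) * B = 1 := mul_inv_cancel₀ (ne_of_gt h1x)
  have hA1 : 1 ≤ A := by nlinarith
  have hA2 : A ≤ 2 := by nlinarith
  have hB2 : 2 ≤ B := by nlinarith
  have hAB : A ≤ B := by
    have hIJ : A * B * (2*x-1) = B - A := by
      rw [hAdef, hBdef]; field_simp; ring
    nlinarith [mul_nonneg (mul_nonneg hI.le hJ.le) (by linarith : (0:ℝ) ≤ 2*x-1)]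
  have hprod : A * B = A + B := by
    rw [hAdef, hBdef]; field_simp; ring
  have hA0 : (0:ℝ) ≤ A := hI.le
  -- value of u 0
  have hu0 : u 0 x = Real.log x - Real.log (1-x) := by
    simp [u, lam]
  have hu0nonneg : 0 ≤ u 0 x := by
    rw [hu0, sub_nonneg]
    exact Real.log_le_log h1x (by linarith)
  have hu0B : u 0 x ≤ B - 2 := by
    rw [hu0, ← Real.log_div (ne_of_gt hx0) (ne_of_gt h1x)]
    have e : x / (1-x) = B - 1 := by rw [hBdef]; field_simp; ring
    rw [e]
    have := Real.log_le_sub_one_of_pos (show (0:ℝ) < B - 1 by linarith)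
    linarith
  -- u (j+1) ≤ SS (j+1)
  have hu_le_SS : ∀ j : ℕ, u (j+1) x ≤ SS A B (j+1) := by
    intro j
    have hpow : ((-1:ℝ))^j * A^(j+1) ≤ A^(j+1) := by
      rcases Nat.even_or_odd j with h | h
      · rw [h.neg_one_pow, one_mul]
      · rw [h.neg_one_pow]
        nlinarith [pow_nonneg hA0 (j+1)]
    rw [u_succ j x hx01, SS]
    have hd : (0:ℝ) < ((j:ℝ)+1)*((j:ℝ)+2) := by positivity
    rw [div_le_div_iff₀ hd (by push_cast; positivity)]
    push_cast
    nlinarith [mul_le_mul_of_nonneg_right hpow hd.le]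
  -- u m = SS m for odd m
  have hu_odd : ∀ t : ℕ, u (2*t+1) x = SS A B (2*t+1) := by
    intro t
    rw [u_succ (2*t) x hx01, (even_two_mul t).neg_one_pow, SS]
    push_cast
    ring_nf
    rw [hAdef, hBdef]; ring
  -- u 0 ≤ u (j+2)
  have hu0_le : ∀ j : ℕ, u 0 x ≤ u (j+2) x := by
    intro j
    have hb := base_sub hA1 hA2 hB2 hAB hprod (j+2) (by omega)
    have hd : (0:ℝ) < ((j:ℝ)+2)*((j:ℝ)+3) := by positivity
    have hb' : ((j:ℝ)+2)*((j:ℝ)+3)*(B-2) ≤ B^(j+2) - A^(j+2) := by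
      push_cast at hb
      nlinarith [hb]
    have h1 : u 0 x ≤ (B^(j+2) - A^(j+2)) / (((j:ℝ)+2)*((j:ℝ)+3)) := by
      rw [le_div_iff₀ hd]
      nlinarith [hb', mul_le_mul_of_nonneg_right hu0B hd.le]
    have hpow : -(A^(j+2)) ≤ ((-1:ℝ))^(j+1) * A^(j+2) := by
      rcases Nat.even_or_odd (j+1) with h | h
      · rw [h.neg_one_pow, one_mul]
        nlinarith [pow_nonneg hA0 (j+2)]
      · rw [h.neg_one_pow]; linarith [pow_nonneg hA0 (j+2)]
    have h2 : (B^(j+2) - A^(j+2)) / (((j:ℝ)+2)*((j:ℝ)+3)) ≤ u (j+2) x := by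
      rw [show j+2 = (j+1)+1 from rfl, u_succ (j+1) x hx01]
      rw [div_le_div_iff₀ hd (by push_cast; positivity)]
      push_cast
      nlinarith [mul_le_mul_of_nonneg_right hpow hd.le]
    linarith
  refine ⟨?_, ?_, ?_⟩
  · -- 0 ≤ min
    refine le_min hu0nonneg ?_
    rw [show (1:ℕ) = 0+1 from rfl, u_succ 0 x hx01]
    simp only [pow_zero, pow_one, one_mul]
    positivity
  · -- min ≤ u k'
    match k' with
    | 0 => exact min_le_left _ _
    | 1 => exact min_le_right _ _
    | (j+2) => exact le_trans (min_le_left _ _) (hu0_le j)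
  · -- u k' ≤ u (r k)
    have hm5 : 5 ≤ r k := le_max_left _ _
    have hmk : k ≤ r k := le_trans (by omega) (le_max_right 5 (2*(k/2)+1))
    have hmodd : r k % 2 = 1 := by unfold r; omega
    have hmSS : u (r k) x = SS A B (r k) := by
      have : r k = 2*(r k / 2)+1 := by omega
      rw [this]; exact hu_odd _
    match k' with
    | 0 =>
      have : r k = (r k - 2) + 2 := by omega
      rw [this]; exact hu0_le _
    | (j+1) =>
      have h1 : u (j+1) x ≤ SS A B (j+1) := hu_le_SS j
      have h2 : SS A B (j+1) ≤ SS A B (r k) := by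
        rcases lt_or_ge j 3 with hj | hj
        · have h5m : SS A B 5 ≤ SS A B (r k) := SS_chain hA1 hA2 hB2 hAB 5 (r k) (by norm_num) hm5
          interval_cases j
          · exact le_trans (SS_1_5 hA1 hA2 hB2 hAB hprod) h5m
          · exact le_trans (SS_2_5 hA1 hA2 hB2 hAB) h5m
          · exact le_trans (SS_3_5 hA1 hA2 hB2 hAB) h5m
        · exact SS_chain hA1 hA2 hB2 hAB (j+1) (r k) (by omega) (by omega)
      rw [hmSS]
      linarith
end

section
/- Let X be a binomial random variable with parameters n and 1/2, and let d be a positive integer. Then E[(X − n/2)^{2d}] ≤ d^{2d} · (n/4)^d. -/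
open Finset

noncomputable def Ssum (n k : ℕ) : ℝ :=
  ∑ j ∈ Finset.range (n+1), (n.choose j : ℝ) * (2*(j:ℝ) - n)^k

def odf (d : ℕ) : ℕ := ∏ i ∈ Finset.range d, (2*i+1)

lemma odf_mul (d : ℕ) : odf d * 2^d * d.factorial = (2*d).factorial := by
  induction d with
  | zero => simp [odf]
  | succ d ih =>
    rw [odf, Finset.prod_range_succ, ← odf]
    rw [show 2*(d+1) = (2*d+1)+1 by ring, Nat.factorial_succ, Nat.factorial_succ,
      Nat.factorial_succ]
    calc odf d * (2*d+1) * 2^(d+1) * ((d+1) * d.factorial)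
        = ((2*d+1)+1) * ((2*d+1) * (odf d * 2^d * d.factorial)) := by ring
      _ = ((2*d+1)+1) * ((2*d+1) * (2*d).factorial) := by rw [ih]

lemma two_pow_fac (m : ℕ) : 2^m * m.factorial ≤ (2*m).factorial := by
  induction m with
  | zero => simp
  | succ m ih =>
    rw [show 2*(m+1) = (2*m+1)+1 by ring, Nat.factorial_succ, Nat.factorial_succ,
      Nat.factorial_succ]
    calc 2^(m+1) * ((m+1) * m.factorial)
        = ((m+1)+(m+1)) * (2^m * m.factorial) := by ring
      _ ≤ ((2*m+1)+1) * ((2*m+1) * (2*m).factorial) := by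
          apply Nat.mul_le_mul
          · omega
          · exact le_trans ih (Nat.le_mul_of_pos_left _ (by omega))

lemma key (i m : ℕ) :
    (2*(i+m)).choose (2*i) * odf i ≤ odf (i+m) * (i+m).choose i := by
  have hK : 0 < 2^i * i.factorial * (2*m).factorial * m.factorial * 2^m :=
    by positivity
  apply Nat.le_of_mul_le_mul_right _ hK
  have h1 : (2*(i+m)).choose (2*i) * (2*i).factorial * (2*m).factorial
      = (2*(i+m)).factorial := by
    have h := Nat.choose_mul_factorial_mul_factorial
      (show 2*i ≤ 2*(i+m) by omega)
    rwa [show 2*(i+m) - 2*i = 2*m by omega] at h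
  have h2 : (i+m).choose i * i.factorial * m.factorial = (i+m).factorial := by
    have h := Nat.choose_mul_factorial_mul_factorial (show i ≤ i+m by omega)
    rwa [show i+m-i = m by omega] at h
  calc (2*(i+m)).choose (2*i) * odf i *
        (2^i * i.factorial * (2*m).factorial * m.factorial * 2^m)
      = ((2*(i+m)).choose (2*i) * (odf i * 2^i * i.factorial) * (2*m).factorial)
          * (m.factorial * 2^m) := by ring
    _ = (2*(i+m)).factorial * (2^m * m.factorial) := by
          rw [odf_mul, h1]; ring
    _ ≤ (2*(i+m)).factorial * (2*m).factorial :=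
          Nat.mul_le_mul_left _ (two_pow_fac m)
    _ = (odf (i+m) * 2^(i+m) * (i+m).factorial) * (2*m).factorial := by
          rw [odf_mul]
    _ = odf (i+m) * (i+m).choose i *
          (2^i * i.factorial * (2*m).factorial * m.factorial * 2^m) := by
          rw [← h2]; ring

lemma Ssum_odd (n k : ℕ) (hk : Odd k) : Ssum n k = 0 := by
  have h : Ssum n k = -Ssum n k := by
    nth_rewrite 2 [Ssum]
    rw [← Finset.sum_range_reflect, Ssum, ← Finset.sum_neg_distrib]
    apply Finset.sum_congr rfl
    intro j hj
    have hjn : j ≤ n := by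
      simp only [Finset.mem_range] at hj; omega
    rw [show n + 1 - 1 - j = n - j by omega, Nat.choose_symm hjn]
    have hc : ((n - j : ℕ) : ℝ) = (n : ℝ) - j := by
      push_cast [hjn]; ring
    rw [hc, show 2*((n:ℝ) - j) - n = -(2*(j:ℝ) - n) by ring, hk.neg_pow]
    ring
  linarith

lemma Ssum_rec (n m : ℕ) :
    Ssum (n+1) m
      = ∑ k ∈ Finset.range (m+1),
          (m.choose k : ℝ) * ((-1)^(m-k) + 1) * Ssum n k := by
  have hu : Ssum (n+1) m
      = ∑ j ∈ Finset.range (n+2), ((n+1).choose j : ℝ) * (2*(j:ℝ) - n - 1)^m := by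
    rw [Ssum]
    apply Finset.sum_congr rfl
    intro j _
    push_cast
    ring_nf
  have step1 : Ssum (n+1) m
      = ∑ j ∈ Finset.range (n+1),
          (n.choose j : ℝ) * ((2*(j:ℝ) - n + 1)^m + (2*(j:ℝ) - n - 1)^m) := by
    calc Ssum (n+1) m
        = ∑ j ∈ Finset.range (n+2), ((n+1).choose j : ℝ) * (2*(j:ℝ) - n - 1)^m := hu
      _ = (∑ j ∈ Finset.range (n+1),
            ((n+1).choose (j+1) : ℝ) * (2*(((j+1:ℕ)):ℝ) - n - 1)^m)
          + ((n+1).choose 0 : ℝ) * (2*(((0:ℕ)):ℝ) - n - 1)^m :=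
          Finset.sum_range_succ'
            (fun j => ((n+1).choose j : ℝ) * (2*(j:ℝ) - n - 1)^m) (n+1)
      _ = (∑ j ∈ Finset.range (n+1),
            ((n.choose j : ℝ) * (2*(j:ℝ) - n + 1)^m
              + (n.choose (j+1) : ℝ) * (2*(((j+1:ℕ)):ℝ) - n - 1)^m))
          + (n.choose 0 : ℝ) * (2*(((0:ℕ)):ℝ) - n - 1)^m := by
          congr 1
          · apply Finset.sum_congr rfl
            intro j _
            rw [Nat.choose_succ_succ]
            push_cast
            ring
          · norm_num
      _ = (∑ j ∈ Finset.range (n+1), (n.choose j : ℝ) * (2*(j:ℝ) - n + 1)^m)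
          + ((∑ j ∈ Finset.range (n+1),
              (n.choose (j+1) : ℝ) * (2*(((j+1:ℕ)):ℝ) - n - 1)^m)
            + (n.choose 0 : ℝ) * (2*(((0:ℕ)):ℝ) - n - 1)^m) := by
          rw [Finset.sum_add_distrib]; ring
      _ = (∑ j ∈ Finset.range (n+1), (n.choose j : ℝ) * (2*(j:ℝ) - n + 1)^m)
          + ∑ j ∈ Finset.range (n+2), (n.choose j : ℝ) * (2*(j:ℝ) - n - 1)^m := by
          rw [← Finset.sum_range_succ'
            (fun j => (n.choose j : ℝ) * (2*(j:ℝ) - n - 1)^m) (n+1)]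
      _ = (∑ j ∈ Finset.range (n+1), (n.choose j : ℝ) * (2*(j:ℝ) - n + 1)^m)
          + ∑ j ∈ Finset.range (n+1), (n.choose j : ℝ) * (2*(j:ℝ) - n - 1)^m := by
          rw [Finset.sum_range_succ
            (fun j => (n.choose j : ℝ) * (2*(j:ℝ) - n - 1)^m) (n+1)]
          rw [Nat.choose_succ_self]
          norm_num
      _ = _ := by
          rw [← Finset.sum_add_distrib]
          apply Finset.sum_congr rfl
          intro j _
          ring
  rw [step1]
  have expand : ∀ j : ℕ,
      (n.choose j : ℝ) * ((2*(j:ℝ) - n + 1)^m + (2*(j:ℝ) - n - 1)^m)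
        = ∑ k ∈ Finset.range (m+1),
            (m.choose k : ℝ) * ((-1)^(m-k) + 1)
              * ((n.choose j : ℝ) * (2*(j:ℝ) - n)^k) := by
    intro j
    have h1 : (2*(j:ℝ) - n + 1)^m
        = ∑ k ∈ Finset.range (m+1),
            (2*(j:ℝ) - n)^k * 1^(m-k) * (m.choose k : ℝ) :=
      add_pow (2*(j:ℝ) - n) 1 m
    have h2 : (2*(j:ℝ) - n - 1)^m
        = ∑ k ∈ Finset.range (m+1),
            (2*(j:ℝ) - n)^k * (-1)^(m-k) * (m.choose k : ℝ) := by
      rw [show 2*(j:ℝ) - n - 1 = (2*(j:ℝ) - n) + (-1) by ring]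
      exact add_pow (2*(j:ℝ) - n) (-1) m
    rw [h1, h2, ← Finset.sum_add_distrib, Finset.mul_sum]
    apply Finset.sum_congr rfl
    intro k _
    simp only [one_pow]
    ring
  rw [Finset.sum_congr rfl (fun j _ => expand j), Finset.sum_comm]
  apply Finset.sum_congr rfl
  intro k _
  rw [Ssum, Finset.mul_sum]

lemma sum_even {g : ℕ → ℝ} (h : ∀ k, Odd k → g k = 0) (d : ℕ) :
    ∑ k ∈ Finset.range (2*d+1), g k = ∑ i ∈ Finset.range (d+1), g (2*i) := by
  induction d with
  | zero => simp
  | succ d ih =>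
    rw [show 2*(d+1)+1 = (2*d+1)+1+1 by ring, Finset.sum_range_succ,
      Finset.sum_range_succ, ih, h (2*d+1) ⟨d, by omega⟩,
      Finset.sum_range_succ (fun i => g (2*i)) (d+1)]
    norm_num
    rw [show 2*d+1+1 = 2*(d+1) by ring]

lemma Ssum_le (n : ℕ) : ∀ d : ℕ, Ssum n (2*d) ≤ (odf d : ℝ) * (n:ℝ)^d * 2^n := by
  induction n with
  | zero =>
    intro d
    have h0 : Ssum 0 (2*d) = (0:ℝ)^(2*d) := by
      rw [Ssum]
      norm_num
    cases d with
    | zero => rw [h0]; norm_num [odf]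
    | succ d =>
      rw [h0, zero_pow (by omega)]
      positivity
  | succ n ih =>
    intro d
    rw [Ssum_rec]
    have hodd : ∀ k, Odd k →
        ((2*d).choose k : ℝ) * ((-1)^(2*d-k) + 1) * Ssum n k = 0 := by
      intro k hk
      rw [Ssum_odd n k hk, mul_zero]
    rw [sum_even hodd d]
    have hterm : ∀ i ∈ Finset.range (d+1),
        ((2*d).choose (2*i) : ℝ) * ((-1)^(2*d-2*i) + 1) * Ssum n (2*i)
          ≤ (odf d : ℝ) * (d.choose i : ℝ) * (2 * (n:ℝ)^i * 2^n) := by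
      intro i hi
      have hid : i ≤ d := by simp only [Finset.mem_range] at hi; omega
      have hpow : ((-1:ℝ))^(2*d-2*i) = 1 := by
        rw [show 2*d-2*i = 2*(d-i) by omega, pow_mul]
        norm_num
      rw [hpow]
      have h1 : Ssum n (2*i) ≤ (odf i : ℝ) * (n:ℝ)^i * 2^n := ih i
      have hkey : ((2*d).choose (2*i) : ℝ) * (odf i : ℝ)
          ≤ (odf d : ℝ) * (d.choose i : ℝ) := by
        have := key i (d - i)
        rw [show i + (d-i) = d by omega] at this
        exact_mod_cast this
      calc ((2*d).choose (2*i) : ℝ) * (1 + 1) * Ssum n (2*i)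
          ≤ ((2*d).choose (2*i) : ℝ) * (1 + 1) * ((odf i : ℝ) * (n:ℝ)^i * 2^n) := by
            apply mul_le_mul_of_nonneg_left h1 (by positivity)
        _ = ((2*d).choose (2*i) : ℝ) * (odf i : ℝ) * (2 * (n:ℝ)^i * 2^n) := by
            ring
        _ ≤ (odf d : ℝ) * (d.choose i : ℝ) * (2 * (n:ℝ)^i * 2^n) := by
            apply mul_le_mul_of_nonneg_right hkey (by positivity)
    calc ∑ i ∈ Finset.range (d+1),
          ((2*d).choose (2*i) : ℝ) * ((-1)^(2*d-2*i) + 1) * Ssum n (2*i)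
        ≤ ∑ i ∈ Finset.range (d+1),
            (odf d : ℝ) * (d.choose i : ℝ) * (2 * (n:ℝ)^i * 2^n) :=
          Finset.sum_le_sum hterm
      _ = (odf d : ℝ) * (2 * 2^n) * ∑ i ∈ Finset.range (d+1),
            (n:ℝ)^i * 1^(d-i) * (d.choose i : ℝ) := by
          rw [Finset.mul_sum]
          apply Finset.sum_congr rfl
          intro i _
          simp only [one_pow]
          ring
      _ = (odf d : ℝ) * (2 * 2^n) * ((n:ℝ) + 1)^d := by
          rw [← add_pow ((n:ℝ)) 1 d]
      _ = (odf d : ℝ) * ((n+1 : ℕ):ℝ)^d * 2^(n+1) := by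
          push_cast
          ring

lemma odf_le (d : ℕ) (hd : 1 ≤ d) : odf d ≤ d^(2*d) := by
  calc odf d ≤ ∏ _i ∈ Finset.range d, d^2 := by
        apply Finset.prod_le_prod'
        intro i hi
        have : i < d := Finset.mem_range.mp hi
        nlinarith
    _ = d^(2*d) := by
        rw [Finset.prod_const, Finset.card_range, ← pow_mul, mul_comm]

/-- For X ∼ Binomial(n, 1/2) and d ≥ 1, E[(X − n/2)^{2d}] ≤ d^{2d}·(n/4)^d.
The expectation is written as an explicit sum against the binomial weights. -/
theorem stmt16 (n d : ℕ) (hd : 1 ≤ d) :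
    ∑ j ∈ Finset.range (n + 1),
        ((n.choose j : ℝ) / 2 ^ n) * ((j : ℝ) - (n : ℝ) / 2) ^ (2 * d)
      ≤ (d : ℝ) ^ (2 * d) * ((n : ℝ) / 4) ^ d := by
  have hLHS : ∑ j ∈ Finset.range (n + 1),
        ((n.choose j : ℝ) / 2 ^ n) * ((j : ℝ) - (n : ℝ) / 2) ^ (2 * d)
      = Ssum n (2*d) * (1 / (2^n * 4^d)) := by
    rw [Ssum, Finset.sum_mul]
    apply Finset.sum_congr rfl
    intro j _
    have h1 : (j : ℝ) - (n : ℝ) / 2 = (2*(j:ℝ) - n) / 2 := by ring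
    rw [h1, div_pow, show ((2:ℝ))^(2*d) = 4^d by rw [pow_mul]; norm_num]
    field_simp
  rw [hLHS]
  have h1 : Ssum n (2*d) ≤ (odf d : ℝ) * (n:ℝ)^d * 2^n := Ssum_le n d
  have h2 : (odf d : ℝ) ≤ (d : ℝ)^(2*d) := by
    exact_mod_cast odf_le d hd
  calc Ssum n (2*d) * (1 / (2^n * 4^d))
      ≤ ((odf d : ℝ) * (n:ℝ)^d * 2^n) * (1 / (2^n * 4^d)) := by
        apply mul_le_mul_of_nonneg_right h1 (by positivity)
    _ = (odf d : ℝ) * ((n:ℝ) / 4)^d := by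
        rw [div_pow]
        field_simp
    _ ≤ (d : ℝ)^(2*d) * ((n:ℝ) / 4)^d := by
        apply mul_le_mul_of_nonneg_right h2 (by positivity)
end

section
/- Let n ∈ ℕ with n ≥ 1, let X ∼ Binomial(n, 1/2), and let p ∈ (0,1]. Then E[p·(X/n)·log₂(p·X/n) + p·(1−X/n)·log₂(p·(1−X/n)) − p·log₂(p/2)] = 1·p − p·log₂(p/2) + p·log₂(p) + p·2^{1−n}·∑_{j=0}^{n} C(n,j)·(j/n)·log₂(j/n); equivalently, in the full-information setting with probability vector (pᵢ) and nᵢ = n·pᵢ observations per prefix, E[Î^{L+1} | ℰ] = 1 + ∑_{i=1}^{2^L} pᵢ·2^{1−nᵢ}·∑_{j=0}^{nᵢ} C(nᵢ,j)·(j/nᵢ)·log₂(j/nᵢ). -/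
open Real Finset

lemma aux_mul_logb (q x : ℝ) (hq : 0 < q) (hx : 0 ≤ x) :
    x * logb 2 (q * x) = x * logb 2 q + x * logb 2 x := by
  rcases eq_or_lt_of_le hx with h | h
  · simp [← h]
  · rw [Real.logb_mul hq.ne' h.ne']; ring

lemma aux_key (m : ℕ) (hm : 1 ≤ m) (q : ℝ) (hq : 0 < q) :
    -q * logb 2 (q / 2)
        + ∑ j ∈ Finset.range (m + 1),
            ((m.choose j : ℝ) / 2 ^ m) *
              (q * ((j : ℝ) / (m : ℝ)) * logb 2 (q * ((j : ℝ) / (m : ℝ)))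
                + q * (1 - (j : ℝ) / (m : ℝ)) *
                    logb 2 (q * (1 - (j : ℝ) / (m : ℝ))))
      = q + q * (2 : ℝ) ^ (1 - (m : ℤ)) *
          ∑ j ∈ Finset.range (m + 1),
            (m.choose j : ℝ) * ((j : ℝ) / (m : ℝ)) * logb 2 ((j : ℝ) / (m : ℝ)) := by
  have hm0 : (0 : ℝ) < (m : ℝ) := by exact_mod_cast hm
  -- abbreviations
  set A : ℕ → ℝ := fun j => ((m.choose j : ℝ) / 2 ^ m) * q * logb 2 q with hA
  set B : ℕ → ℝ := fun j => q / 2 ^ m *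
      ((m.choose j : ℝ) * ((j : ℝ) / (m : ℝ)) * logb 2 ((j : ℝ) / (m : ℝ))) with hB
  set D : ℕ → ℝ := fun j => q / 2 ^ m *
      ((m.choose j : ℝ) * ((1 - (j : ℝ) / (m : ℝ)) * logb 2 (1 - (j : ℝ) / (m : ℝ)))) with hD
  have hsummand : ∀ j ∈ Finset.range (m + 1),
      ((m.choose j : ℝ) / 2 ^ m) *
              (q * ((j : ℝ) / (m : ℝ)) * logb 2 (q * ((j : ℝ) / (m : ℝ)))
                + q * (1 - (j : ℝ) / (m : ℝ)) *
                    logb 2 (q * (1 - (j : ℝ) / (m : ℝ))))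
      = A j + (B j + D j) := by
    intro j hj
    have hjm : j ≤ m := Nat.lt_succ_iff.mp (Finset.mem_range.mp hj)
    have hx1 : (0 : ℝ) ≤ (j : ℝ) / (m : ℝ) := by positivity
    have hx2 : (0 : ℝ) ≤ 1 - (j : ℝ) / (m : ℝ) := by
      rw [sub_nonneg, div_le_one hm0]
      exact_mod_cast hjm
    have e1 := aux_mul_logb q ((j : ℝ) / (m : ℝ)) hq hx1
    have e2 := aux_mul_logb q (1 - (j : ℝ) / (m : ℝ)) hq hx2
    have hxsum : (j : ℝ) / (m : ℝ) + (1 - (j : ℝ) / (m : ℝ)) = 1 := by ring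
    calc ((m.choose j : ℝ) / 2 ^ m) *
              (q * ((j : ℝ) / (m : ℝ)) * logb 2 (q * ((j : ℝ) / (m : ℝ)))
                + q * (1 - (j : ℝ) / (m : ℝ)) *
                    logb 2 (q * (1 - (j : ℝ) / (m : ℝ))))
        = ((m.choose j : ℝ) / 2 ^ m) *
              (q * (((j : ℝ) / (m : ℝ)) * logb 2 (q * ((j : ℝ) / (m : ℝ))))
                + q * ((1 - (j : ℝ) / (m : ℝ)) *
                    logb 2 (q * (1 - (j : ℝ) / (m : ℝ))))) := by ring
      _ = ((m.choose j : ℝ) / 2 ^ m) *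
              (q * (((j : ℝ) / (m : ℝ)) * logb 2 q + ((j : ℝ) / (m : ℝ)) * logb 2 ((j : ℝ) / (m : ℝ)))
                + q * ((1 - (j : ℝ) / (m : ℝ)) * logb 2 q
                  + (1 - (j : ℝ) / (m : ℝ)) * logb 2 (1 - (j : ℝ) / (m : ℝ)))) := by
            rw [e1, e2]
      _ = ((m.choose j : ℝ) / 2 ^ m) * q * logb 2 q * ((j : ℝ) / (m : ℝ) + (1 - (j : ℝ) / (m : ℝ)))
            + (B j + D j) := by simp only [hB, hD]; ring
      _ = A j + (B j + D j) := by rw [hxsum, hA]; ring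
  rw [Finset.sum_congr rfl hsummand, Finset.sum_add_distrib, Finset.sum_add_distrib]
  -- ∑ A = q * logb 2 q
  have hsumA : ∑ j ∈ Finset.range (m + 1), A j = q * logb 2 q := by
    simp only [hA]
    rw [← Finset.sum_mul, ← Finset.sum_mul, ← Finset.sum_div]
    have : ∑ j ∈ Finset.range (m + 1), ((m.choose j : ℝ)) = 2 ^ m := by
      rw [← Nat.cast_sum]
      norm_cast
      exact Nat.sum_range_choose m
    rw [this, div_self (by positivity)]; ring
  -- ∑ D = ∑ B by reflection
  have hsumD : ∑ j ∈ Finset.range (m + 1), D j = ∑ j ∈ Finset.range (m + 1), B j := by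
    rw [← Finset.sum_range_reflect D (m + 1)]
    refine Finset.sum_congr rfl ?_
    intro j hj
    have hjm : j ≤ m := Nat.lt_succ_iff.mp (Finset.mem_range.mp hj)
    simp only [hB, hD, Nat.add_sub_cancel]
    rw [Nat.choose_symm hjm, Nat.cast_sub hjm]
    have h1 : 1 - ((m : ℝ) - (j : ℝ)) / (m : ℝ) = (j : ℝ) / (m : ℝ) := by
      field_simp
      ring
    rw [h1]; ring
  rw [hsumA, hsumD]
  -- logb 2 (q/2) = logb 2 q - 1
  have hlogq : logb 2 (q / 2) = logb 2 q - 1 := by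
    rw [Real.logb_div hq.ne' two_ne_zero]
    norm_num [Real.logb_self_eq_one]
  have hpow : (2 : ℝ) ^ (1 - (m : ℤ)) = 2 / 2 ^ m := by
    rw [zpow_sub₀ (two_ne_zero), zpow_one, zpow_natCast]
  rw [hlogq, hpow]
  simp only [hB]
  rw [← Finset.mul_sum]
  ring

/-- Expected value of the plug-in market-information estimator under the
EMH conditioning ℰ: each prefix `i` has known probability `p i`, `n i`
observed suffixes whose count of 1's is Binomial(n i, 1/2), so that
E[Î^{L+1} | ℰ] = 1 + ∑ᵢ pᵢ 2^{1−nᵢ} ∑ⱼ C(nᵢ,j)(j/nᵢ)log₂(j/nᵢ).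
The conditional expectation is written as an explicit sum against binomial
weights; the convention 0·log₂0 = 0 is automatic since `Real.logb 2 0 = 0`. -/
theorem stmt17 (L : ℕ) (hL : 0 < L) (p : Fin (2 ^ L) → ℝ)
    (hp : ∀ i, 0 < p i) (hp1 : ∀ i, p i ≤ 1) (hsum : ∑ i, p i = 1)
    (n : Fin (2 ^ L) → ℕ) (hn : ∀ i, 1 ≤ n i) :
    ∑ i, (-(p i) * logb 2 (p i / 2)
        + ∑ j ∈ Finset.range (n i + 1),
            (((n i).choose j : ℝ) / 2 ^ (n i)) *
              (p i * ((j : ℝ) / (n i : ℝ)) * logb 2 (p i * ((j : ℝ) / (n i : ℝ)))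
                + p i * (1 - (j : ℝ) / (n i : ℝ)) *
                    logb 2 (p i * (1 - (j : ℝ) / (n i : ℝ)))))
      = 1 + ∑ i, p i * (2 : ℝ) ^ (1 - (n i : ℤ)) *
          ∑ j ∈ Finset.range (n i + 1),
            ((n i).choose j : ℝ) * ((j : ℝ) / (n i : ℝ)) * logb 2 ((j : ℝ) / (n i : ℝ)) := by
  have h : ∀ i ∈ Finset.univ, (-(p i) * logb 2 (p i / 2)
        + ∑ j ∈ Finset.range (n i + 1),
            (((n i).choose j : ℝ) / 2 ^ (n i)) *
              (p i * ((j : ℝ) / (n i : ℝ)) * logb 2 (p i * ((j : ℝ) / (n i : ℝ)))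
                + p i * (1 - (j : ℝ) / (n i : ℝ)) *
                    logb 2 (p i * (1 - (j : ℝ) / (n i : ℝ)))))
      = p i + p i * (2 : ℝ) ^ (1 - (n i : ℤ)) *
          ∑ j ∈ Finset.range (n i + 1),
            ((n i).choose j : ℝ) * ((j : ℝ) / (n i : ℝ)) * logb 2 ((j : ℝ) / (n i : ℝ)) := by
    intro i _
    exact aux_key (n i) (hn i) (p i) (hp i)
  rw [Finset.sum_congr rfl h, Finset.sum_add_distrib, hsum]
end
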